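/- arXiv:2407.10561 — 2 statements merged into one kernel-verified Lean document; each statement's English description precedes it below -/
import Mathlib

section
/- Fix T > 0, parameters a > 𝔭 𝔥 T with 𝔥, 𝔭 ≥ 0, φ with 2φ − 𝔥 ≥ 0, and r ≥ 0. For ν ∈ L²([0,T]) define Q^ν_t = q₀ + ∫₀ᵗ (ν_s − w_s) ds (w fixed and square-integrable), Y^ν_t = e^{−𝔭 t} Y_0 + 𝔥 ∫₀ᵗ e^{−𝔭(t−s)} ν_s ds, and J(ν) = ∫₀ᵀ [−a ν_t² + Q^ν_t (c_t + 𝔥 ν_t − 𝔭 Y^ν_t − 2φ(ν_t − w_t) − r Q^ν_t)] dt, with c fixed and integrable. Then J is strictly concave on L²([0,T]). -/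
open MeasureTheory intervalIntegral Real
open Set

lemma swap_tri (T : ℝ) (F : ℝ → ℝ → ℝ)
    (hF : Integrable (fun p : ℝ × ℝ => F p.1 p.2)
      ((volume.restrict (Set.Ioc (0:ℝ) T)).prod (volume.restrict (Set.Ioc (0:ℝ) T)))) :
    (∫ t in Set.Ioc (0:ℝ) T, ∫ s in Set.Ioc (0:ℝ) t, F s t)
      = ∫ s in Set.Ioc (0:ℝ) T, ∫ t in Set.Ioc s T, F s t := by
  set μ := volume.restrict (Set.Ioc (0:ℝ) T) with hμ
  set H : ℝ → ℝ → ℝ := fun t s => Set.indicator (Set.Iic t) (fun s => F s t) s with hH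
  have h1 : ∀ t ∈ Set.Ioc (0:ℝ) T, (∫ s in Set.Ioc (0:ℝ) t, F s t) = ∫ s, H t s ∂μ := by
    intro t ht
    rw [hμ, setIntegral_indicator measurableSet_Iic]
    congr 1
    rw [Set.Ioc_inter_Iic, min_eq_right ht.2]
  have h2 : ∀ s ∈ Set.Ioc (0:ℝ) T, (∫ t, H t s ∂μ) = ∫ t in Set.Ioc s T, F s t := by
    intro s hs
    have : (fun t => H t s) = Set.indicator (Set.Ici s) (fun t => F s t) := by
      funext t
      simp only [hH, Set.indicator]
      by_cases h : s ≤ t <;> simp [h, Set.mem_Iic, Set.mem_Ici]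
    rw [this, hμ, setIntegral_indicator measurableSet_Ici]
    rw [show Set.Ioc (0:ℝ) T ∩ Set.Ici s = Set.Icc s T from ?_, integral_Icc_eq_integral_Ioc]
    ext x
    simp only [Set.mem_inter_iff, Set.mem_Ioc, Set.mem_Ici, Set.mem_Icc]
    constructor
    · rintro ⟨⟨_, h2⟩, h3⟩; exact ⟨h3, h2⟩
    · rintro ⟨h1', h2⟩; exact ⟨⟨lt_of_lt_of_le hs.1 h1', h2⟩, h1'⟩
  rw [setIntegral_congr_fun measurableSet_Ioc h1, ← setIntegral_congr_fun measurableSet_Ioc h2]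
  have hHint : Integrable (Function.uncurry H) (μ.prod μ) := by
    have : Function.uncurry H = Set.indicator {p : ℝ × ℝ | p.2 ≤ p.1}
        (fun p => F p.2 p.1) := by
      funext p
      simp only [Function.uncurry, hH, Set.indicator, Set.mem_Iic, Set.mem_setOf_eq]
    rw [this]
    exact (hF.swap).indicator (measurableSet_le measurable_snd measurable_fst)
  exact integral_integral_swap hHint

lemma primitive_mul_self (T : ℝ) (hT : 0 ≤ T) (f : ℝ → ℝ)
    (hf : IntervalIntegrable f volume 0 T) :
    (∫ t in (0:ℝ)..T, (∫ s in (0:ℝ)..t, f s) * f t)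
      = (∫ s in (0:ℝ)..T, f s) ^ 2 / 2 := by
  have hsub : ∀ t ∈ Set.Icc (0:ℝ) T, IntervalIntegrable f volume 0 t := fun t ht =>
    hf.mono_set (by rw [Set.uIcc_of_le ht.1, Set.uIcc_of_le hT]; exact Set.Icc_subset_Icc le_rfl ht.2)
  have key : (∫ t in Set.Ioc (0:ℝ) T, (∫ s in Set.Ioc (0:ℝ) t, f s * f t))
      = ∫ s in Set.Ioc (0:ℝ) T, ∫ t in Set.Ioc s T, f s * f t := by
    apply swap_tri
    have h1 : IntegrableOn f (Set.Ioc (0:ℝ) T) volume := by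
      simpa [intervalIntegrable_iff, Set.uIoc_of_le hT] using hf
    exact h1.mul_prod h1
  -- convert LHS
  have hG : ∀ t ∈ Set.Ioc (0:ℝ) T, (∫ s in (0:ℝ)..t, f s) * f t
      = ∫ s in Set.Ioc (0:ℝ) t, f s * f t := by
    intro t ht
    rw [intervalIntegral.integral_of_le ht.1.le, ← MeasureTheory.integral_mul_const]
  have hRHS : ∀ s ∈ Set.Ioc (0:ℝ) T, (∫ t in Set.Ioc s T, f s * f t)
      = f s * ((∫ u in (0:ℝ)..T, f u) - ∫ u in (0:ℝ)..s, f u) := by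
    intro s hs
    rw [MeasureTheory.integral_const_mul]
    congr 1
    rw [← intervalIntegral.integral_of_le hs.2]
    have := intervalIntegral.integral_add_adjacent_intervals (hsub s ⟨hs.1.le, hs.2⟩)
      (hf.mono_set (by rw [Set.uIcc_of_le hT, Set.uIcc_of_le hs.2]; exact Set.Icc_subset_Icc hs.1.le le_rfl))
    linarith [this]
  have e1 : (∫ t in (0:ℝ)..T, (∫ s in (0:ℝ)..t, f s) * f t)
      = ∫ s in Set.Ioc (0:ℝ) T, f s * ((∫ u in (0:ℝ)..T, f u) - ∫ u in (0:ℝ)..s, f u) := by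
    rw [intervalIntegral.integral_of_le hT, setIntegral_congr_fun measurableSet_Ioc hG, key,
      setIntegral_congr_fun measurableSet_Ioc hRHS]
  -- now split
  have hGcont : ContinuousOn (fun s => ∫ u in (0:ℝ)..s, f u) (Set.Icc 0 T) := by
    have := intervalIntegral.continuousOn_primitive_interval (a := (0:ℝ)) (b := T) (μ := volume)
      (f := f) (by simpa [Set.uIcc_of_le hT, intervalIntegrable_iff, Set.uIoc_of_le hT,
        integrableOn_Icc_iff_integrableOn_Ioc] using hf)
    simpa [Set.uIcc_of_le hT] using this
  have hfG : IntervalIntegrable (fun s => f s * ((∫ u in (0:ℝ)..T, f u) - ∫ u in (0:ℝ)..s, f u))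
      volume 0 T := by
    apply IntervalIntegrable.mul_continuousOn hf
    rw [Set.uIcc_of_le hT]
    exact (continuousOn_const.sub hGcont)
  have e2 : (∫ s in Set.Ioc (0:ℝ) T, f s * ((∫ u in (0:ℝ)..T, f u) - ∫ u in (0:ℝ)..s, f u))
      = (∫ s in (0:ℝ)..T, f s) * (∫ u in (0:ℝ)..T, f u)
        - ∫ s in (0:ℝ)..T, f s * (∫ u in (0:ℝ)..s, f u) := by
    rw [← intervalIntegral.integral_of_le hT]
    have : ∀ s, f s * ((∫ u in (0:ℝ)..T, f u) - ∫ u in (0:ℝ)..s, f u)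
        = f s * (∫ u in (0:ℝ)..T, f u) - f s * (∫ u in (0:ℝ)..s, f u) := fun s => by ring
    simp only [this]
    rw [intervalIntegral.integral_sub (hf.mul_const _)
      (hf.mul_continuousOn (by rw [Set.uIcc_of_le hT]; exact hGcont)),
      intervalIntegral.integral_mul_const]
  have comm : (∫ s in (0:ℝ)..T, f s * (∫ u in (0:ℝ)..s, f u))
      = ∫ t in (0:ℝ)..T, (∫ s in (0:ℝ)..t, f s) * f t := by
    congr 1; funext s; ring
  have := e1.trans e2
  rw [comm] at this
  nlinarith [this]

lemma exp_prim (𝔭 : ℝ) (x y : ℝ) :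
    (∫ u in x..y, 𝔭 * Real.exp (𝔭 * u)) = Real.exp (𝔭 * y) - Real.exp (𝔭 * x) := by
  have hder : ∀ u : ℝ, HasDerivAt (fun v => Real.exp (𝔭 * v)) (𝔭 * Real.exp (𝔭 * u)) u := by
    intro u
    have h1 : HasDerivAt (fun v : ℝ => 𝔭 * v) 𝔭 u := by
      simpa using (hasDerivAt_id u).const_mul 𝔭
    simpa [mul_comm] using h1.exp
  exact intervalIntegral.integral_eq_sub_of_hasDerivAt (fun u _ => hder u)
    ((continuous_const.mul (Real.continuous_exp.comp (continuous_const.mul continuous_id))).intervalIntegrable x y)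

lemma exp_kernel_repr (𝔭 : ℝ) (t : ℝ) (ht : 0 ≤ t) (f : ℝ → ℝ)
    (hf : IntervalIntegrable f volume 0 t) :
    (∫ s in (0:ℝ)..t, Real.exp (-𝔭 * (t - s)) * f s)
      = (∫ s in (0:ℝ)..t, f s)
        - ∫ u in (0:ℝ)..t, (𝔭 * Real.exp (-𝔭 * (t - u))) * (∫ s in (0:ℝ)..u, f s) := by
  have hfIoc : IntegrableOn f (Set.Ioc (0:ℝ) t) volume := by
    simpa [intervalIntegrable_iff, Set.uIoc_of_le ht] using hf
  have hsub : ∀ u ∈ Set.Icc (0:ℝ) t, IntervalIntegrable f volume 0 u := fun u hu =>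
    hf.mono_set (by rw [Set.uIcc_of_le hu.1, Set.uIcc_of_le ht]; exact Set.Icc_subset_Icc le_rfl hu.2)
  have hGcont : ContinuousOn (fun u => ∫ s in (0:ℝ)..u, f s) (Set.Icc 0 t) := by
    have := intervalIntegral.continuousOn_primitive_interval (a := (0:ℝ)) (b := t) (μ := volume)
      (f := f) (by simpa [Set.uIcc_of_le ht, integrableOn_Icc_iff_integrableOn_Ioc] using hfIoc)
    simpa [Set.uIcc_of_le ht] using this
  -- key : A = e^{pt} G t - ∫ p e^{pu} G u du
  have hswap : (∫ s in Set.Ioc (0:ℝ) t, ∫ u in Set.Ioc (0:ℝ) s, (𝔭 * Real.exp (𝔭 * u)) * f s)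
      = ∫ u in Set.Ioc (0:ℝ) t, ∫ s in Set.Ioc u t, (𝔭 * Real.exp (𝔭 * u)) * f s := by
    exact swap_tri t (fun u s => (𝔭 * Real.exp (𝔭 * u)) * f s)
      (Integrable.mul_prod
        (by
          have hc : Continuous fun u => 𝔭 * Real.exp (𝔭 * u) :=
            continuous_const.mul (Real.continuous_exp.comp (continuous_const.mul continuous_id))
          exact (show IntegrableOn (fun u => 𝔭 * Real.exp (𝔭 * u)) (Set.Ioc (0:ℝ) t) volume by
            simpa [intervalIntegrable_iff, Set.uIoc_of_le ht] using hc.intervalIntegrable (μ := volume) 0 t))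
        hfIoc)
  -- expand e^{ps} = 1 + ∫_0^s p e^{pu} du
  have split : (∫ s in (0:ℝ)..t, Real.exp (𝔭 * s) * f s)
      = (∫ s in (0:ℝ)..t, f s) + ∫ s in (0:ℝ)..t, (∫ u in (0:ℝ)..s, 𝔭 * Real.exp (𝔭 * u)) * f s := by
    have hexpf : IntervalIntegrable (fun s => Real.exp (𝔭 * s) * f s) volume 0 t :=
      hf.continuousOn_mul ((Real.continuous_exp.comp (continuous_const.mul continuous_id)).continuousOn)
    have h2 : IntervalIntegrable (fun s => (∫ u in (0:ℝ)..s, 𝔭 * Real.exp (𝔭 * u)) * f s) volume 0 t := by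
      apply hf.continuousOn_mul
      simp only [exp_prim]
      exact (((Real.continuous_exp.comp (continuous_const.mul continuous_id)).sub continuous_const).continuousOn)
    rw [← intervalIntegral.integral_add hf h2]
    congr 1; funext s
    rw [exp_prim]
    simp only [mul_zero, Real.exp_zero]
    ring
  -- compute second term of split via swap
  have term2 : (∫ s in (0:ℝ)..t, (∫ u in (0:ℝ)..s, 𝔭 * Real.exp (𝔭 * u)) * f s)
      = (Real.exp (𝔭 * t) - 1) * (∫ s in (0:ℝ)..t, f s)
        - ∫ u in (0:ℝ)..t, (𝔭 * Real.exp (𝔭 * u)) * (∫ s in (0:ℝ)..u, f s) := by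
    have e1 : (∫ s in (0:ℝ)..t, (∫ u in (0:ℝ)..s, 𝔭 * Real.exp (𝔭 * u)) * f s)
        = ∫ s in Set.Ioc (0:ℝ) t, ∫ u in Set.Ioc (0:ℝ) s, (𝔭 * Real.exp (𝔭 * u)) * f s := by
      rw [intervalIntegral.integral_of_le ht]
      apply setIntegral_congr_fun measurableSet_Ioc
      intro s hs
      show (∫ u in (0:ℝ)..s, 𝔭 * Real.exp (𝔭 * u)) * f s
        = ∫ u in Set.Ioc (0:ℝ) s, (𝔭 * Real.exp (𝔭 * u)) * f s
      rw [intervalIntegral.integral_of_le hs.1.le, ← MeasureTheory.integral_mul_const]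
    have e2 : ∀ u ∈ Set.Ioc (0:ℝ) t, (∫ s in Set.Ioc u t, (𝔭 * Real.exp (𝔭 * u)) * f s)
        = (𝔭 * Real.exp (𝔭 * u)) * ((∫ s in (0:ℝ)..t, f s) - ∫ s in (0:ℝ)..u, f s) := by
      intro u hu
      rw [MeasureTheory.integral_const_mul]
      congr 1
      rw [← intervalIntegral.integral_of_le hu.2]
      have := intervalIntegral.integral_add_adjacent_intervals (hsub u ⟨hu.1.le, hu.2⟩)
        (hf.mono_set (by rw [Set.uIcc_of_le ht, Set.uIcc_of_le hu.2]; exact Set.Icc_subset_Icc hu.1.le le_rfl))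
      linarith [this]
    rw [e1, hswap, setIntegral_congr_fun measurableSet_Ioc e2, ← intervalIntegral.integral_of_le ht]
    have hpe : IntervalIntegrable (fun u => (𝔭 * Real.exp (𝔭 * u)) * (∫ s in (0:ℝ)..t, f s)) volume 0 t :=
      ((continuous_const.mul (Real.continuous_exp.comp (continuous_const.mul continuous_id))).mul continuous_const).intervalIntegrable _ _
    have hpeG : IntervalIntegrable (fun u => (𝔭 * Real.exp (𝔭 * u)) * (∫ s in (0:ℝ)..u, f s)) volume 0 t := by
      apply ContinuousOn.intervalIntegrable_of_Icc ht
      exact ((continuous_const.mul (Real.continuous_exp.comp (continuous_const.mul continuous_id))).continuousOn.mul hGcont)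
    have : ∀ u, (𝔭 * Real.exp (𝔭 * u)) * ((∫ s in (0:ℝ)..t, f s) - ∫ s in (0:ℝ)..u, f s)
        = (𝔭 * Real.exp (𝔭 * u)) * (∫ s in (0:ℝ)..t, f s)
          - (𝔭 * Real.exp (𝔭 * u)) * (∫ s in (0:ℝ)..u, f s) := fun u => by ring
    simp only [this]
    rw [intervalIntegral.integral_sub hpe hpeG, intervalIntegral.integral_mul_const, exp_prim]
    simp only [mul_zero, Real.exp_zero]
  -- assemble : multiply by e^{-pt}
  have assemble : (∫ s in (0:ℝ)..t, Real.exp (𝔭 * s) * f s)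
      = Real.exp (𝔭 * t) * (∫ s in (0:ℝ)..t, f s)
        - ∫ u in (0:ℝ)..t, (𝔭 * Real.exp (𝔭 * u)) * (∫ s in (0:ℝ)..u, f s) := by
    rw [split, term2]; ring
  have lhs_eq : (∫ s in (0:ℝ)..t, Real.exp (-𝔭 * (t - s)) * f s)
      = Real.exp (-𝔭 * t) * ∫ s in (0:ℝ)..t, Real.exp (𝔭 * s) * f s := by
    rw [← intervalIntegral.integral_const_mul]
    congr 1; funext s
    rw [← mul_assoc, ← Real.exp_add]
    ring_nf
  have rhs2 : (∫ u in (0:ℝ)..t, (𝔭 * Real.exp (-𝔭 * (t - u))) * (∫ s in (0:ℝ)..u, f s))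
      = Real.exp (-𝔭 * t) * ∫ u in (0:ℝ)..t, (𝔭 * Real.exp (𝔭 * u)) * (∫ s in (0:ℝ)..u, f s) := by
    rw [← intervalIntegral.integral_const_mul]
    congr 1; funext u
    rw [show (-𝔭 * (t - u)) = (-𝔭 * t) + 𝔭 * u by ring, Real.exp_add]
    ring
  rw [lhs_eq, assemble, rhs2]
  have h1 : Real.exp (-𝔭 * t) * Real.exp (𝔭 * t) = 1 := by
    rw [← Real.exp_add, show -𝔭 * t + 𝔭 * t = 0 by ring, Real.exp_zero]
  rw [mul_sub, ← mul_assoc, h1, one_mul]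

lemma exp_prim2 (𝔭 c x y : ℝ) :
    (∫ t in x..y, 𝔭 * Real.exp (-𝔭 * (t - c)))
      = Real.exp (-𝔭 * (x - c)) - Real.exp (-𝔭 * (y - c)) := by
  have hder : ∀ t : ℝ, HasDerivAt (fun v => -Real.exp (-𝔭 * (v - c)))
      (𝔭 * Real.exp (-𝔭 * (t - c))) t := by
    intro t
    have h1 : HasDerivAt (fun v : ℝ => -𝔭 * (v - c)) (-𝔭) t := by
      simpa using ((hasDerivAt_id t).sub_const c).const_mul (-𝔭)
    have : HasDerivAt (fun v => -Real.exp (-𝔭 * (v - c)))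
        (-(Real.exp (-𝔭 * (t - c)) * -𝔭)) t := (h1.exp).neg
    simpa [mul_comm] using this
  rw [intervalIntegral.integral_eq_sub_of_hasDerivAt (fun t _ => hder t)
    ((continuous_const.mul (Real.continuous_exp.comp
      ((continuous_const.mul (continuous_id.sub continuous_const))))).intervalIntegrable x y)]
  ring

lemma exp_prim3 (𝔭 c x y : ℝ) :
    (∫ u in x..y, 𝔭 * Real.exp (-𝔭 * (c - u)))
      = Real.exp (-𝔭 * (c - y)) - Real.exp (-𝔭 * (c - x)) := by
  have hder : ∀ u : ℝ, HasDerivAt (fun v => Real.exp (-𝔭 * (c - v)))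
      (𝔭 * Real.exp (-𝔭 * (c - u))) u := by
    intro u
    have h1 : HasDerivAt (fun v : ℝ => -𝔭 * (c - v)) 𝔭 u := by
      simpa using ((hasDerivAt_const u c).sub (hasDerivAt_id u)).const_mul (-𝔭)
    simpa [mul_comm] using h1.exp
  rw [intervalIntegral.integral_eq_sub_of_hasDerivAt (fun u _ => hder u)
    ((continuous_const.mul (Real.continuous_exp.comp
      ((continuous_const.mul (continuous_const.sub continuous_id))))).intervalIntegrable x y)]

lemma exp_quadratic_nonneg (T 𝔭 : ℝ) (hT : 0 ≤ T) (h𝔭 : 0 ≤ 𝔭) (f : ℝ → ℝ)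
    (hf : IntervalIntegrable f volume 0 T) :
    0 ≤ ∫ t in (0:ℝ)..T,
        (∫ s in (0:ℝ)..t, f s) * (∫ s in (0:ℝ)..t, Real.exp (-𝔭 * (t - s)) * f s) := by
  set G : ℝ → ℝ := fun u => ∫ s in (0:ℝ)..u, f s with hGdef
  have hfIoc : IntegrableOn f (Set.Ioc (0:ℝ) T) volume := by
    simpa [intervalIntegrable_iff, Set.uIoc_of_le hT] using hf
  have hsub : ∀ t ∈ Set.Icc (0:ℝ) T, IntervalIntegrable f volume 0 t := fun t ht =>
    hf.mono_set (by rw [Set.uIcc_of_le ht.1, Set.uIcc_of_le hT]; exact Set.Icc_subset_Icc le_rfl ht.2)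
  have hGcont : ContinuousOn G (Set.Icc 0 T) := by
    have := intervalIntegral.continuousOn_primitive_interval (a := (0:ℝ)) (b := T) (μ := volume)
      (f := f) (by simpa [Set.uIcc_of_le hT, integrableOn_Icc_iff_integrableOn_Ioc] using hfIoc)
    simpa [Set.uIcc_of_le hT] using this
  set M : ℝ → ℝ := fun t => ∫ u in (0:ℝ)..t, (𝔭 * Real.exp (𝔭 * u)) * G u with hMdef
  set M2 : ℝ → ℝ := fun t => ∫ u in (0:ℝ)..t, (𝔭 * Real.exp (𝔭 * u)) * (G u) ^ 2 with hM2def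
  have hker : ContinuousOn (fun u => 𝔭 * Real.exp (𝔭 * u)) (Set.Icc (0:ℝ) T) :=
    (continuous_const.mul (Real.continuous_exp.comp (continuous_const.mul continuous_id))).continuousOn
  have hMint : IntegrableOn (fun u => (𝔭 * Real.exp (𝔭 * u)) * G u) (Set.Icc (0:ℝ) T) volume :=
    (hker.mul hGcont).integrableOn_Icc (μ := volume)
  have hM2int : IntegrableOn (fun u => (𝔭 * Real.exp (𝔭 * u)) * (G u) ^ 2) (Set.Icc (0:ℝ) T) volume :=
    (hker.mul (hGcont.pow 2)).integrableOn_Icc (μ := volume)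
  have hMcont : ContinuousOn M (Set.Icc 0 T) := by
    have := intervalIntegral.continuousOn_primitive_interval (a := (0:ℝ)) (b := T) (μ := volume)
      (f := fun u => (𝔭 * Real.exp (𝔭 * u)) * G u) (by simpa [Set.uIcc_of_le hT] using hMint)
    simpa [Set.uIcc_of_le hT] using this
  have hM2cont : ContinuousOn M2 (Set.Icc 0 T) := by
    have := intervalIntegral.continuousOn_primitive_interval (a := (0:ℝ)) (b := T) (μ := volume)
      (f := fun u => (𝔭 * Real.exp (𝔭 * u)) * (G u) ^ 2) (by simpa [Set.uIcc_of_le hT] using hM2int)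
    simpa [Set.uIcc_of_le hT] using this
  have hexpc : Continuous (fun t : ℝ => Real.exp (-𝔭 * t)) :=
    Real.continuous_exp.comp (continuous_const.mul continuous_id)
  -- kernel representation
  have hK : ∀ t ∈ Set.Icc (0:ℝ) T,
      (∫ s in (0:ℝ)..t, Real.exp (-𝔭 * (t - s)) * f s)
        = G t - Real.exp (-𝔭 * t) * M t := by
    intro t ht
    rw [exp_kernel_repr 𝔭 t ht.1 f (hsub t ht)]
    congr 1
    rw [hMdef]
    simp only
    rw [← intervalIntegral.integral_const_mul]
    congr 1; funext u
    rw [show (-𝔭 * (t - u)) = (-𝔭 * t) + 𝔭 * u by ring, Real.exp_add]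
    ring
  -- rewrite main integral
  have main_eq : (∫ t in (0:ℝ)..T,
        (∫ s in (0:ℝ)..t, f s) * (∫ s in (0:ℝ)..t, Real.exp (-𝔭 * (t - s)) * f s))
      = (∫ t in (0:ℝ)..T, (G t) ^ 2)
        - ∫ t in (0:ℝ)..T, G t * (Real.exp (-𝔭 * t) * M t) := by
    have e1 : (∫ t in (0:ℝ)..T,
        (∫ s in (0:ℝ)..t, f s) * (∫ s in (0:ℝ)..t, Real.exp (-𝔭 * (t - s)) * f s))
        = ∫ t in (0:ℝ)..T, ((G t) ^ 2 - G t * (Real.exp (-𝔭 * t) * M t)) := by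
      apply intervalIntegral.integral_congr
      intro t ht
      rw [Set.uIcc_of_le hT] at ht
      simp only
      rw [hK t ht]
      ring
    rw [e1, intervalIntegral.integral_sub (f := fun t => G t ^ 2)
      (g := fun t => G t * (Real.exp (-𝔭 * t) * M t))
      (((hGcont.pow 2)).intervalIntegrable_of_Icc hT)
      ((hGcont.mul (hexpc.continuousOn.mul hMcont)).intervalIntegrable_of_Icc hT)]
  -- pointwise bound
  have ptbound : ∀ t ∈ Set.Icc (0:ℝ) T,
      G t * (Real.exp (-𝔭 * t) * M t)
        ≤ (G t) ^ 2 / 2 + (Real.exp (-𝔭 * t) * M2 t) / 2 := by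
    intro t ht
    have hIccsub : Set.Icc (0:ℝ) t ⊆ Set.Icc (0:ℝ) T := Set.Icc_subset_Icc le_rfl ht.2
    have hGc' : ContinuousOn G (Set.Icc 0 t) := hGcont.mono hIccsub
    have hker2 : ContinuousOn (fun u => 𝔭 * Real.exp (-𝔭 * (t - u))) (Set.Icc (0:ℝ) t) :=
      (continuous_const.mul (Real.continuous_exp.comp
        (continuous_const.mul (continuous_const.sub continuous_id)))).continuousOn
    have step : (∫ u in (0:ℝ)..t, (𝔭 * Real.exp (-𝔭 * (t - u))) * (G t * G u))
        = (G t * Real.exp (-𝔭 * t)) * ∫ u in (0:ℝ)..t, (𝔭 * Real.exp (𝔭 * u)) * G u := by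
      rw [← intervalIntegral.integral_const_mul]
      congr 1; funext u
      rw [show (-𝔭 * (t - u)) = (-𝔭 * t) + 𝔭 * u by ring, Real.exp_add]
      ring
    have eq1 : G t * (Real.exp (-𝔭 * t) * M t)
        = ∫ u in (0:ℝ)..t, (𝔭 * Real.exp (-𝔭 * (t - u))) * (G t * G u) := by
      rw [step, hMdef]
      ring
    have eq2 : (∫ u in (0:ℝ)..t, (𝔭 * Real.exp (-𝔭 * (t - u))) * (((G t) ^ 2 + (G u) ^ 2) / 2))
        = (G t) ^ 2 / 2 * (1 - Real.exp (-𝔭 * t)) + (Real.exp (-𝔭 * t) * M2 t) / 2 := by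
      have split : ∀ u, (𝔭 * Real.exp (-𝔭 * (t - u))) * (((G t) ^ 2 + (G u) ^ 2) / 2)
          = (G t) ^ 2 / 2 * (𝔭 * Real.exp (-𝔭 * (t - u)))
            + (𝔭 * Real.exp (-𝔭 * (t - u))) * (G u) ^ 2 / 2 := fun u => by ring
      simp only [split]
      rw [intervalIntegral.integral_add (f := fun u => G t ^ 2 / 2 * (𝔭 * Real.exp (-𝔭 * (t - u))))
        (g := fun u => 𝔭 * Real.exp (-𝔭 * (t - u)) * G u ^ 2 / 2)
        ((hker2.intervalIntegrable_of_Icc ht.1).const_mul _)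
        (((hker2.mul ((hGc'.pow 2))).intervalIntegrable_of_Icc ht.1).div_const 2)]
      congr 1
      · rw [intervalIntegral.integral_const_mul, exp_prim3]
        simp only [sub_self, mul_zero, neg_zero, zero_mul, Real.exp_zero]
        ring
      · rw [hM2def]; simp only
        rw [intervalIntegral.integral_div, ← intervalIntegral.integral_const_mul]
        congr 1
        · congr 1; funext u
          rw [show (-𝔭 * (t - u)) = (-𝔭 * t) + 𝔭 * u by ring, Real.exp_add]
          ring
    have mono : (∫ u in (0:ℝ)..t, (𝔭 * Real.exp (-𝔭 * (t - u))) * (G t * G u))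
        ≤ ∫ u in (0:ℝ)..t, (𝔭 * Real.exp (-𝔭 * (t - u))) * (((G t) ^ 2 + (G u) ^ 2) / 2) := by
      apply intervalIntegral.integral_mono_on ht.1
        ((hker2.mul (continuousOn_const.mul hGc')).intervalIntegrable_of_Icc ht.1)
        ((hker2.mul ((continuousOn_const.add (hGc'.pow 2)).div_const 2)).intervalIntegrable_of_Icc ht.1)
      intro u _
      have h1 : 0 ≤ 𝔭 * Real.exp (-𝔭 * (t - u)) :=
        mul_nonneg h𝔭 (Real.exp_pos _).le
      have h2 : G t * G u ≤ ((G t) ^ 2 + (G u) ^ 2) / 2 := by nlinarith [sq_nonneg (G t - G u)]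
      exact mul_le_mul_of_nonneg_left h2 h1
    rw [eq1]
    calc (∫ u in (0:ℝ)..t, (𝔭 * Real.exp (-𝔭 * (t - u))) * (G t * G u))
        ≤ ∫ u in (0:ℝ)..t, (𝔭 * Real.exp (-𝔭 * (t - u))) * (((G t) ^ 2 + (G u) ^ 2) / 2) := mono
      _ = (G t) ^ 2 / 2 * (1 - Real.exp (-𝔭 * t)) + (Real.exp (-𝔭 * t) * M2 t) / 2 := eq2
      _ ≤ (G t) ^ 2 / 2 + (Real.exp (-𝔭 * t) * M2 t) / 2 := by
          nlinarith [sq_nonneg (G t), (Real.exp_pos (-𝔭 * t)).le]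
  -- integral bound on the L-term
  have intbound : (∫ t in (0:ℝ)..T, G t * (Real.exp (-𝔭 * t) * M t))
      ≤ (∫ t in (0:ℝ)..T, (G t) ^ 2 / 2) + ∫ t in (0:ℝ)..T, (Real.exp (-𝔭 * t) * M2 t) / 2 := by
    rw [← intervalIntegral.integral_add (f := fun t => G t ^ 2 / 2)
      (g := fun t => Real.exp (-𝔭 * t) * M2 t / 2)
      ((((hGcont.pow 2)).intervalIntegrable_of_Icc hT).div_const 2)
      (((hexpc.continuousOn.mul hM2cont).intervalIntegrable_of_Icc hT).div_const 2)]
    exact intervalIntegral.integral_mono_on hT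
      ((hGcont.mul (hexpc.continuousOn.mul hMcont)).intervalIntegrable_of_Icc hT)
      ((((hGcont.pow 2).div_const 2).add
        ((hexpc.continuousOn.mul hM2cont).div_const 2)).intervalIntegrable_of_Icc hT)
      ptbound
  -- swap bound for the M2 term
  have swapM2 : (∫ t in (0:ℝ)..T, Real.exp (-𝔭 * t) * M2 t)
      = ∫ u in Set.Ioc (0:ℝ) T, (G u) ^ 2 * (1 - Real.exp (-𝔭 * (T - u))) := by
    have e1 : (∫ t in (0:ℝ)..T, Real.exp (-𝔭 * t) * M2 t)
        = ∫ t in Set.Ioc (0:ℝ) T, ∫ u in Set.Ioc (0:ℝ) t,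
            ((𝔭 * Real.exp (𝔭 * u)) * (G u) ^ 2) * Real.exp (-𝔭 * t) := by
      rw [intervalIntegral.integral_of_le hT]
      apply setIntegral_congr_fun measurableSet_Ioc
      intro t ht
      simp only
      rw [mul_comm (Real.exp (-𝔭 * t)) (M2 t), hM2def]
      simp only
      rw [intervalIntegral.integral_of_le ht.1.le, ← MeasureTheory.integral_mul_const]
    have e2 := swap_tri T (fun u t => ((𝔭 * Real.exp (𝔭 * u)) * (G u) ^ 2) * Real.exp (-𝔭 * t))
      (Integrable.mul_prod
        ((hker.mul (hGcont.pow 2)).integrableOn_Icc (μ := volume)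
          |>.mono_set Set.Ioc_subset_Icc_self)
        ((hexpc.integrableOn_Icc (μ := volume) (a := (0:ℝ)) (b := T)).mono_set Set.Ioc_subset_Icc_self))
    rw [e1, e2]
    apply setIntegral_congr_fun measurableSet_Ioc
    intro u hu
    simp only
    have inner0 : (∫ t in Set.Ioc u T, ((𝔭 * Real.exp (𝔭 * u)) * (G u) ^ 2) * Real.exp (-𝔭 * t))
        = ∫ t in u..T, (G u) ^ 2 * (𝔭 * Real.exp (-𝔭 * (t - u))) := by
      rw [intervalIntegral.integral_of_le hu.2]
      apply setIntegral_congr_fun measurableSet_Ioc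
      intro t _
      simp only
      rw [show (-𝔭 * (t - u)) = 𝔭 * u + (-𝔭 * t) by ring, Real.exp_add]
      ring
    rw [inner0, intervalIntegral.integral_const_mul, exp_prim2]
    simp only [sub_self, mul_zero, neg_zero, zero_mul, Real.exp_zero]
  have M2bound : (∫ t in (0:ℝ)..T, Real.exp (-𝔭 * t) * M2 t) ≤ ∫ t in (0:ℝ)..T, (G t) ^ 2 := by
    rw [swapM2, intervalIntegral.integral_of_le hT]
    apply setIntegral_mono_on
    · have hcs : ContinuousOn (fun u : ℝ => (G u) ^ 2 * (1 - Real.exp (-𝔭 * (T - u))))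
          (Set.Icc (0:ℝ) T) :=
        (hGcont.pow 2).mul ((continuous_const.sub (Real.continuous_exp.comp
          (continuous_const.mul (continuous_const.sub continuous_id)))).continuousOn)
      exact (hcs.integrableOn_Icc (μ := volume)).mono_set Set.Ioc_subset_Icc_self
    · exact (((hGcont.pow 2)).integrableOn_Icc (μ := volume)).mono_set Set.Ioc_subset_Icc_self
    · exact measurableSet_Ioc
    · intro u hu
      have h1 : 0 ≤ (G u) ^ 2 := sq_nonneg _
      nlinarith [(Real.exp_pos (-𝔭 * (T - u))).le]
  -- conclude
  rw [main_eq]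
  have hhalf : (∫ t in (0:ℝ)..T, (G t) ^ 2 / 2) = (∫ t in (0:ℝ)..T, (G t) ^ 2) / 2 :=
    intervalIntegral.integral_div 2 _
  have hhalf2 : (∫ t in (0:ℝ)..T, (Real.exp (-𝔭 * t) * M2 t) / 2)
      = (∫ t in (0:ℝ)..T, Real.exp (-𝔭 * t) * M2 t) / 2 :=
    intervalIntegral.integral_div 2 _
  rw [hhalf, hhalf2] at intbound
  linarith

lemma prim_contOn (T : ℝ) (hT : 0 ≤ T) (f : ℝ → ℝ)
    (hf : IntervalIntegrable f volume 0 T) :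
    ContinuousOn (fun t => ∫ s in (0:ℝ)..t, f s) (Set.Icc 0 T) := by
  have hfIoc : IntegrableOn f (Set.Ioc (0:ℝ) T) volume := by
    simpa [intervalIntegrable_iff, Set.uIoc_of_le hT] using hf
  have := intervalIntegral.continuousOn_primitive_interval (a := (0:ℝ)) (b := T) (μ := volume)
    (f := f) (by simpa [Set.uIcc_of_le hT, integrableOn_Icc_iff_integrableOn_Ioc] using hfIoc)
  simpa [Set.uIcc_of_le hT] using this

lemma sub_int {T : ℝ} (hT : 0 ≤ T) {f : ℝ → ℝ}
    (hf : IntervalIntegrable f volume 0 T) {t : ℝ} (ht : t ∈ Set.Icc (0:ℝ) T) :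
    IntervalIntegrable f volume 0 t :=
  hf.mono_set (by rw [Set.uIcc_of_le ht.1, Set.uIcc_of_le hT]; exact Set.Icc_subset_Icc le_rfl ht.2)

/-- strict concavity of the broker's deterministic functional. -/
theorem broker_functional_strictly_concave
    (T : ℝ) (hT : 0 < T) (a 𝔥 𝔭 φ r q₀ Y₀ : ℝ)
    (h𝔥 : 0 ≤ 𝔥) (h𝔭 : 0 ≤ 𝔭) (ha : 𝔭 * 𝔥 * T < a) (hφ : 0 ≤ 2 * φ - 𝔥)
    (hr : 0 ≤ r)
    (w c : ℝ → ℝ)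
    (hw : IntervalIntegrable w volume 0 T)
    (hw2 : IntervalIntegrable (fun t => (w t) ^ 2) volume 0 T)
    (hc : IntervalIntegrable c volume 0 T)
    (Q : (ℝ → ℝ) → ℝ → ℝ)
    (hQ : ∀ ν t, Q ν t = q₀ + ∫ s in (0:ℝ)..t, (ν s - w s))
    (Y : (ℝ → ℝ) → ℝ → ℝ)
    (hY : ∀ ν t, Y ν t =
      Real.exp (-𝔭 * t) * Y₀ + 𝔥 * ∫ s in (0:ℝ)..t, Real.exp (-𝔭 * (t - s)) * ν s)
    (J : (ℝ → ℝ) → ℝ)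
    (hJ : ∀ ν : ℝ → ℝ, J ν =
      ∫ t in (0:ℝ)..T,
        (-a * (ν t) ^ 2 + Q ν t *
          (c t + 𝔥 * ν t - 𝔭 * Y ν t - 2 * φ * (ν t - w t) - r * Q ν t)))
    (ν ζ : ℝ → ℝ)
    (hν : IntervalIntegrable ν volume 0 T)
    (hν2 : IntervalIntegrable (fun t => (ν t) ^ 2) volume 0 T)
    (hζ : IntervalIntegrable ζ volume 0 T)
    (hζ2 : IntervalIntegrable (fun t => (ζ t) ^ 2) volume 0 T)
    (hne : 0 < volume {t ∈ Set.Icc (0 : ℝ) T | ν t ≠ ζ t})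
    (ρ : ℝ) (hρ : ρ ∈ Set.Ioo (0 : ℝ) 1) :
    J (fun t => ρ * ν t + (1 - ρ) * ζ t) > ρ * J ν + (1 - ρ) * J ζ := by
  have hT' : (0:ℝ) ≤ T := hT.le
  set μf : ℝ → ℝ := fun t => ρ * ν t + (1 - ρ) * ζ t with hμfdef
  have hδ : IntervalIntegrable (fun s => ν s - ζ s) volume 0 T := hν.sub hζ
  -- product integrability
  have hmul : IntervalIntegrable (fun t => ν t * ζ t) volume 0 T := by
    apply IntervalIntegrable.mono_fun' (g := fun t => ((ν t) ^ 2 + (ζ t) ^ 2) / 2)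
      ((hν2.add hζ2).div_const 2)
    · have h1 := hν.aestronglyMeasurable
      have h2 := hζ.aestronglyMeasurable
      rw [Set.uIoc_of_le hT']
      exact h1.mul h2
    · apply Filter.Eventually.of_forall
      intro x
      simp only [Real.norm_eq_abs]
      rw [abs_mul]
      nlinarith [sq_abs (ν x), sq_abs (ζ x), sq_nonneg (|ν x| - |ζ x|), abs_nonneg (ν x),
        abs_nonneg (ζ x)]
  have hδ2 : IntervalIntegrable (fun t => (ν t - ζ t) ^ 2) volume 0 T := by
    have : (fun t => (ν t - ζ t) ^ 2)
        = fun t => ((ν t) ^ 2 + (ζ t) ^ 2) - 2 * (ν t * ζ t) := by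
      funext t; ring
    rw [this]
    exact (hν2.add hζ2).sub (hmul.const_mul 2)
  have hμf : IntervalIntegrable μf volume 0 T := (hν.const_mul ρ).add (hζ.const_mul (1 - ρ))
  have hμf2 : IntervalIntegrable (fun t => (μf t) ^ 2) volume 0 T := by
    have : (fun t => (μf t) ^ 2)
        = fun t => ρ ^ 2 * (ν t) ^ 2 + (2 * (ρ * (1 - ρ))) * (ν t * ζ t)
          + (1 - ρ) ^ 2 * (ζ t) ^ 2 := by
      funext t; simp only [hμfdef]; ring
    rw [this]
    exact ((hν2.const_mul _).add (hmul.const_mul _)).add (hζ2.const_mul _)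
  -- continuity of Q g, Y g and integrability of the integrand of J
  have hQfun : ∀ g : ℝ → ℝ, Q g = fun t => q₀ + ∫ s in (0:ℝ)..t, (g s - w s) :=
    fun g => funext (hQ g)
  have hYfun : ∀ g : ℝ → ℝ, Y g = fun t =>
      Real.exp (-𝔭 * t) * Y₀ + 𝔥 * (Real.exp (-𝔭 * t) * ∫ s in (0:ℝ)..t, Real.exp (𝔭 * s) * g s) := by
    intro g
    funext t
    rw [hY g t]
    congr 2
    rw [← intervalIntegral.integral_const_mul]
    congr 1; funext s
    rw [show (-𝔭 * (t - s)) = -𝔭 * t + 𝔭 * s by ring, Real.exp_add]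
    ring
  have hQcont : ∀ g : ℝ → ℝ, IntervalIntegrable g volume 0 T →
      ContinuousOn (Q g) (Set.Icc 0 T) := by
    intro g hg
    rw [hQfun g]
    exact continuousOn_const.add (prim_contOn T hT' _ (hg.sub hw))
  have hYcont : ∀ g : ℝ → ℝ, IntervalIntegrable g volume 0 T →
      ContinuousOn (Y g) (Set.Icc 0 T) := by
    intro g hg
    rw [hYfun g]
    have hexpc : Continuous (fun t : ℝ => Real.exp (-𝔭 * t)) :=
      Real.continuous_exp.comp (continuous_const.mul continuous_id)
    have hprim : ContinuousOn (fun t => ∫ s in (0:ℝ)..t, Real.exp (𝔭 * s) * g s) (Set.Icc 0 T) :=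
      prim_contOn T hT' _ (hg.continuousOn_mul
        (Real.continuous_exp.comp (continuous_const.mul continuous_id)).continuousOn)
    exact ((hexpc.continuousOn.mul continuousOn_const).add
      (continuousOn_const.mul (hexpc.continuousOn.mul hprim)))
  have key : ∀ g : ℝ → ℝ, IntervalIntegrable g volume 0 T →
      IntervalIntegrable (fun t => (g t) ^ 2) volume 0 T →
      IntervalIntegrable (fun t => -a * (g t) ^ 2 + Q g t *
        (c t + 𝔥 * g t - 𝔭 * Y g t - 2 * φ * (g t - w t) - r * Q g t)) volume 0 T := by
    intro g hg hg2
    have hQc := hQcont g hg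
    have hYc := hYcont g hg
    have hQi : IntervalIntegrable (Q g) volume 0 T :=
      hQc.intervalIntegrable_of_Icc hT'
    have hYi : IntervalIntegrable (Y g) volume 0 T :=
      hYc.intervalIntegrable_of_Icc hT'
    have hbr : IntervalIntegrable (fun t =>
        c t + 𝔥 * g t - 𝔭 * Y g t - 2 * φ * (g t - w t) - r * Q g t) volume 0 T :=
      ((((hc.add (hg.const_mul 𝔥)).sub (hYi.const_mul 𝔭)).sub
        ((hg.sub hw).const_mul (2 * φ))).sub (hQi.const_mul r))
    exact (hg2.const_mul (-a)).add (hbr.continuousOn_mul (by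
      rw [Set.uIcc_of_le hT']; exact hQc))
  -- pointwise affine relations
  have hQlin : ∀ t ∈ Set.Icc (0:ℝ) T, Q μf t = ρ * Q ν t + (1 - ρ) * Q ζ t := by
    intro t ht
    rw [hQ μf t, hQ ν t, hQ ζ t]
    have e : (∫ s in (0:ℝ)..t, (μf s - w s))
        = ρ * (∫ s in (0:ℝ)..t, (ν s - w s)) + (1 - ρ) * ∫ s in (0:ℝ)..t, (ζ s - w s) := by
      rw [← intervalIntegral.integral_const_mul, ← intervalIntegral.integral_const_mul,
        ← intervalIntegral.integral_add ((sub_int hT' (hν.sub hw) ht).const_mul ρ)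
          ((sub_int hT' (hζ.sub hw) ht).const_mul (1 - ρ))]
      congr 1; funext s
      simp only [hμfdef]; ring
    rw [e]; ring
  have hQdiff : ∀ t ∈ Set.Icc (0:ℝ) T,
      Q ν t - Q ζ t = ∫ s in (0:ℝ)..t, (ν s - ζ s) := by
    intro t ht
    rw [hQ ν t, hQ ζ t]
    have e : (∫ s in (0:ℝ)..t, (ν s - w s)) - (∫ s in (0:ℝ)..t, (ζ s - w s))
        = ∫ s in (0:ℝ)..t, (ν s - ζ s) := by
      rw [← intervalIntegral.integral_sub (sub_int hT' (hν.sub hw) ht)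
        (sub_int hT' (hζ.sub hw) ht)]
      congr 1; funext s; ring
    linarith [e]
  have hkerc : ∀ t : ℝ, ContinuousOn (fun s => Real.exp (-𝔭 * (t - s))) (Set.uIcc (0:ℝ) t) :=
    fun t => (Real.continuous_exp.comp
      (continuous_const.mul (continuous_const.sub continuous_id))).continuousOn
  have hYlin : ∀ t ∈ Set.Icc (0:ℝ) T, Y μf t = ρ * Y ν t + (1 - ρ) * Y ζ t := by
    intro t ht
    rw [hY μf t, hY ν t, hY ζ t]
    have e : (∫ s in (0:ℝ)..t, Real.exp (-𝔭 * (t - s)) * μf s)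
        = ρ * (∫ s in (0:ℝ)..t, Real.exp (-𝔭 * (t - s)) * ν s)
          + (1 - ρ) * ∫ s in (0:ℝ)..t, Real.exp (-𝔭 * (t - s)) * ζ s := by
      rw [← intervalIntegral.integral_const_mul, ← intervalIntegral.integral_const_mul,
        ← intervalIntegral.integral_add
          (((sub_int hT' hν ht).continuousOn_mul (hkerc t)).const_mul ρ)
          (((sub_int hT' hζ ht).continuousOn_mul (hkerc t)).const_mul (1 - ρ))]
      congr 1; funext s
      simp only [hμfdef]; ring
    rw [e]; ring
  have hYdiff : ∀ t ∈ Set.Icc (0:ℝ) T,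
      Y ν t - Y ζ t = 𝔥 * ∫ s in (0:ℝ)..t, Real.exp (-𝔭 * (t - s)) * (ν s - ζ s) := by
    intro t ht
    rw [hY ν t, hY ζ t]
    have e : (∫ s in (0:ℝ)..t, Real.exp (-𝔭 * (t - s)) * ν s)
          - (∫ s in (0:ℝ)..t, Real.exp (-𝔭 * (t - s)) * ζ s)
        = ∫ s in (0:ℝ)..t, Real.exp (-𝔭 * (t - s)) * (ν s - ζ s) := by
      rw [← intervalIntegral.integral_sub
        ((sub_int hT' hν ht).continuousOn_mul (hkerc t))
        ((sub_int hT' hζ ht).continuousOn_mul (hkerc t))]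
      congr 1; funext s; ring
    linear_combination 𝔥 * e
  -- the defect integrand
  set D : ℝ → ℝ := fun t =>
    a * (ν t - ζ t) ^ 2
      + (2 * φ - 𝔥) * ((∫ s in (0:ℝ)..t, (ν s - ζ s)) * (ν t - ζ t))
      + (𝔭 * 𝔥) * ((∫ s in (0:ℝ)..t, (ν s - ζ s))
          * (∫ s in (0:ℝ)..t, Real.exp (-𝔭 * (t - s)) * (ν s - ζ s)))
      + r * (∫ s in (0:ℝ)..t, (ν s - ζ s)) ^ 2 with hDdef
  -- pointwise identity
  have ptid : ∀ t ∈ Set.Icc (0:ℝ) T,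
      (-a * (μf t) ^ 2 + Q μf t *
          (c t + 𝔥 * μf t - 𝔭 * Y μf t - 2 * φ * (μf t - w t) - r * Q μf t))
        - (ρ * (-a * (ν t) ^ 2 + Q ν t *
            (c t + 𝔥 * ν t - 𝔭 * Y ν t - 2 * φ * (ν t - w t) - r * Q ν t))
          + (1 - ρ) * (-a * (ζ t) ^ 2 + Q ζ t *
            (c t + 𝔥 * ζ t - 𝔭 * Y ζ t - 2 * φ * (ζ t - w t) - r * Q ζ t)))
        = ρ * (1 - ρ) * D t := by
    intro t ht
    have h3 := hQdiff t ht
    have h4 := hYdiff t ht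
    rw [hQlin t ht, hYlin t ht, hDdef]
    simp only [hμfdef]
    rw [← h3]
    linear_combination (ρ * (1 - ρ) * 𝔭 * (Q ν t - Q ζ t)) * h4
  -- integrability of D pieces
  have hGcont : ContinuousOn (fun t => ∫ s in (0:ℝ)..t, (ν s - ζ s)) (Set.Icc 0 T) :=
    prim_contOn T hT' _ hδ
  have hKfun : (fun t => ∫ s in (0:ℝ)..t, Real.exp (-𝔭 * (t - s)) * (ν s - ζ s))
      = fun t => Real.exp (-𝔭 * t) * ∫ s in (0:ℝ)..t, Real.exp (𝔭 * s) * (ν s - ζ s) := by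
    funext t
    rw [← intervalIntegral.integral_const_mul]
    congr 1; funext s
    rw [show (-𝔭 * (t - s)) = -𝔭 * t + 𝔭 * s by ring, Real.exp_add]
    ring
  have hKcont : ContinuousOn (fun t => ∫ s in (0:ℝ)..t, Real.exp (-𝔭 * (t - s)) * (ν s - ζ s))
      (Set.Icc 0 T) := by
    rw [hKfun]
    exact ((Real.continuous_exp.comp (continuous_const.mul continuous_id)).continuousOn.mul
      (prim_contOn T hT' _ (hδ.continuousOn_mul
        (Real.continuous_exp.comp (continuous_const.mul continuous_id)).continuousOn)))
  have hD1 : IntervalIntegrable (fun t => a * (ν t - ζ t) ^ 2) volume 0 T :=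
    hδ2.const_mul a
  have hD2 : IntervalIntegrable
      (fun t => (2 * φ - 𝔥) * ((∫ s in (0:ℝ)..t, (ν s - ζ s)) * (ν t - ζ t))) volume 0 T :=
    ((hδ.continuousOn_mul (by rw [Set.uIcc_of_le hT']; exact hGcont)).const_mul _)
  have hD3 : IntervalIntegrable (fun t => (𝔭 * 𝔥) * ((∫ s in (0:ℝ)..t, (ν s - ζ s))
      * (∫ s in (0:ℝ)..t, Real.exp (-𝔭 * (t - s)) * (ν s - ζ s)))) volume 0 T :=
    (((hGcont.mul hKcont).intervalIntegrable_of_Icc hT').const_mul _)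
  have hD4 : IntervalIntegrable (fun t => r * (∫ s in (0:ℝ)..t, (ν s - ζ s)) ^ 2) volume 0 T :=
    (((hGcont.pow 2).intervalIntegrable_of_Icc hT').const_mul r)
  have hDint : IntervalIntegrable D volume 0 T := by
    rw [hDdef]
    exact ((hD1.add hD2).add hD3).add hD4
  -- main difference computation
  have hfν := key ν hν hν2
  have hfζ := key ζ hζ hζ2
  have hfμ := key μf hμf hμf2
  have Ediff : J μf - (ρ * J ν + (1 - ρ) * J ζ) = ρ * (1 - ρ) * ∫ t in (0:ℝ)..T, D t := by
    rw [hJ μf, hJ ν, hJ ζ]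
    rw [← intervalIntegral.integral_const_mul, ← intervalIntegral.integral_const_mul,
      ← intervalIntegral.integral_add (hfν.const_mul ρ) (hfζ.const_mul (1 - ρ)),
      ← intervalIntegral.integral_sub hfμ ((hfν.const_mul ρ).add (hfζ.const_mul (1 - ρ))),
      ← intervalIntegral.integral_const_mul]
    apply intervalIntegral.integral_congr
    intro t ht
    rw [Set.uIcc_of_le hT'] at ht
    simpa using ptid t ht
  -- split the integral of D
  have hsplit : (∫ t in (0:ℝ)..T, D t)
      = a * (∫ t in (0:ℝ)..T, (ν t - ζ t) ^ 2)
        + (2 * φ - 𝔥) * (∫ t in (0:ℝ)..T, (∫ s in (0:ℝ)..t, (ν s - ζ s)) * (ν t - ζ t))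
        + (𝔭 * 𝔥) * (∫ t in (0:ℝ)..T, (∫ s in (0:ℝ)..t, (ν s - ζ s))
            * (∫ s in (0:ℝ)..t, Real.exp (-𝔭 * (t - s)) * (ν s - ζ s)))
        + r * ∫ t in (0:ℝ)..T, (∫ s in (0:ℝ)..t, (ν s - ζ s)) ^ 2 := by
    rw [hDdef]
    rw [intervalIntegral.integral_add ((hD1.add hD2).add hD3) hD4,
      intervalIntegral.integral_add (hD1.add hD2) hD3,
      intervalIntegral.integral_add hD1 hD2,
      intervalIntegral.integral_const_mul, intervalIntegral.integral_const_mul,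
      intervalIntegral.integral_const_mul, intervalIntegral.integral_const_mul]
  -- positivity of each piece
  have I1pos : 0 < ∫ t in (0:ℝ)..T, (ν t - ζ t) ^ 2 := by
    rw [intervalIntegral.integral_of_le hT']
    have hint : IntegrableOn (fun t => (ν t - ζ t) ^ 2) (Set.Ioc 0 T) volume := by
      simpa [intervalIntegrable_iff, Set.uIoc_of_le hT'] using hδ2
    rw [setIntegral_pos_iff_support_of_nonneg_ae
      (Filter.Eventually.of_forall (fun x => sq_nonneg _)) hint]
    have hsubset : {t | t ∈ Set.Icc (0:ℝ) T ∧ ν t ≠ ζ t}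
        ⊆ (Function.support (fun t => (ν t - ζ t) ^ 2) ∩ Set.Ioc 0 T) ∪ {0} := by
      rintro t ⟨htIcc, htne⟩
      by_cases h0 : t = 0
      · right; simp [h0]
      · left
        constructor
        · simp only [Function.mem_support]
          intro hcon
          apply htne
          have := pow_eq_zero_iff (n := 2) (by norm_num) |>.mp hcon
          linarith [this]
        · exact ⟨lt_of_le_of_ne htIcc.1 (Ne.symm h0), htIcc.2⟩
    calc (0:ENNReal) < volume {t | t ∈ Set.Icc (0:ℝ) T ∧ ν t ≠ ζ t} := hne
      _ ≤ volume ((Function.support (fun t => (ν t - ζ t) ^ 2) ∩ Set.Ioc 0 T) ∪ {0}) :=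
          measure_mono hsubset
      _ ≤ volume (Function.support (fun t => (ν t - ζ t) ^ 2) ∩ Set.Ioc 0 T) + volume {0} :=
          measure_union_le _ _
      _ = volume (Function.support (fun t => (ν t - ζ t) ^ 2) ∩ Set.Ioc 0 T) := by
          simp
  have I2val := primitive_mul_self T hT' (fun s => ν s - ζ s) hδ
  have I2nonneg : 0 ≤ ∫ t in (0:ℝ)..T, (∫ s in (0:ℝ)..t, (ν s - ζ s)) * (ν t - ζ t) := by
    rw [I2val]; positivity
  have I3nonneg := exp_quadratic_nonneg T 𝔭 hT' h𝔭 (fun s => ν s - ζ s) hδ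
  have I4nonneg : 0 ≤ ∫ t in (0:ℝ)..T, (∫ s in (0:ℝ)..t, (ν s - ζ s)) ^ 2 :=
    intervalIntegral.integral_nonneg hT' (fun u _ => sq_nonneg _)
  have hapos : 0 < a := lt_of_le_of_lt (by positivity) ha
  have hDpos : 0 < ∫ t in (0:ℝ)..T, D t := by
    rw [hsplit]
    have t1 : 0 < a * ∫ t in (0:ℝ)..T, (ν t - ζ t) ^ 2 := mul_pos hapos I1pos
    have t2 : 0 ≤ (2 * φ - 𝔥) * ∫ t in (0:ℝ)..T, (∫ s in (0:ℝ)..t, (ν s - ζ s)) * (ν t - ζ t) :=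
      mul_nonneg hφ I2nonneg
    have t3 : 0 ≤ (𝔭 * 𝔥) * ∫ t in (0:ℝ)..T, (∫ s in (0:ℝ)..t, (ν s - ζ s))
        * (∫ s in (0:ℝ)..t, Real.exp (-𝔭 * (t - s)) * (ν s - ζ s)) :=
      mul_nonneg (mul_nonneg h𝔭 h𝔥) I3nonneg
    have t4 : 0 ≤ r * ∫ t in (0:ℝ)..T, (∫ s in (0:ℝ)..t, (ν s - ζ s)) ^ 2 :=
      mul_nonneg hr I4nonneg
    linarith
  have hρpos : 0 < ρ * (1 - ρ) := mul_pos hρ.1 (by linarith [hρ.2])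
  have final : 0 < J μf - (ρ * J ν + (1 - ρ) * J ζ) := by
    rw [Ediff]
    exact mul_pos hρpos hDpos
  simp only [hμfdef] at final
  linarith
end

section
/- With J as in the informed trader's deterministic functional, the Gâteaux derivative of J at η in direction 𝔫 ∈ L²([0,T]) exists and equals ∫₀ᵀ 𝔫_t [−2b η_t − 2ψ Q^η_t + ∫ₜᵀ (c_u − 2ψ η_u − 2r Q^η_u) du] dt. -/
open MeasureTheory intervalIntegral Filter Topology Set

lemma sq_mul_II {T : ℝ} (hT : 0 ≤ T) {f g : ℝ → ℝ}
    (hf : IntervalIntegrable f volume 0 T)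
    (hf2 : IntervalIntegrable (fun t => f t ^ 2) volume 0 T)
    (hg : IntervalIntegrable g volume 0 T)
    (hg2 : IntervalIntegrable (fun t => g t ^ 2) volume 0 T) :
    IntervalIntegrable (fun t => f t * g t) volume 0 T := by
  rw [intervalIntegrable_iff_integrableOn_Ioc_of_le hT] at *
  have hmeas : AEStronglyMeasurable (fun t => f t * g t) (volume.restrict (Ioc 0 T)) :=
    hf.aestronglyMeasurable.mul hg.aestronglyMeasurable
  refine Integrable.mono' ((hf2.add hg2).const_mul (1/2 : ℝ)) hmeas ?_
  refine Filter.Eventually.of_forall (fun t => ?_)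
  have h1 : |f t * g t| ≤ (f t ^ 2 + g t ^ 2) / 2 := by
    rw [abs_mul]
    nlinarith [sq_nonneg (|f t| - |g t|), sq_abs (f t), sq_abs (g t), abs_nonneg (f t),
      abs_nonneg (g t)]
  rw [Real.norm_eq_abs]; simp only [Pi.add_apply]
  linarith

lemma fubini_primitive {T : ℝ} (hT : 0 ≤ T) {f g : ℝ → ℝ}
    (hf : IntervalIntegrable f volume 0 T)
    (hg : IntervalIntegrable g volume 0 T) :
    ∫ t in (0:ℝ)..T, (∫ u in (0:ℝ)..t, f u) * g t
      = ∫ u in (0:ℝ)..T, f u * ∫ t in u..T, g t := by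
  have hfi : IntegrableOn f (Ioc 0 T) volume :=
    (intervalIntegrable_iff_integrableOn_Ioc_of_le hT).1 hf
  have hgi : IntegrableOn g (Ioc 0 T) volume :=
    (intervalIntegrable_iff_integrableOn_Ioc_of_le hT).1 hg
  set μ : Measure ℝ := volume.restrict (Ioc 0 T) with hμ
  have hS : MeasurableSet {p : ℝ × ℝ | p.2 ≤ p.1} :=
    measurableSet_le measurable_snd measurable_fst
  have hF : Integrable (fun p : ℝ × ℝ => g p.1 * f p.2) (μ.prod μ) := hgi.mul_prod hfi
  have hΦ : Integrable ({p : ℝ × ℝ | p.2 ≤ p.1}.indicator fun p => g ((p : ℝ × ℝ).1) * f p.2)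
      (μ.prod μ) := hF.indicator hS
  have swap := MeasureTheory.integral_integral_swap
      (f := fun t u => ({p : ℝ × ℝ | p.2 ≤ p.1}.indicator fun p => g ((p : ℝ × ℝ).1) * f p.2) (t, u))
      (μ := μ) (ν := μ) hΦ
  have hL : (∫ t, (∫ u, ({p : ℝ × ℝ | p.2 ≤ p.1}.indicator fun p => g ((p : ℝ × ℝ).1) * f p.2) (t, u) ∂μ) ∂μ)
      = ∫ t in (0:ℝ)..T, (∫ u in (0:ℝ)..t, f u) * g t := by
    rw [intervalIntegral.integral_of_le hT, hμ]
    refine setIntegral_congr_fun measurableSet_Ioc (fun t ht => ?_)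
    have h1 : (fun u => ({p : ℝ × ℝ | p.2 ≤ p.1}.indicator fun p => g ((p : ℝ × ℝ).1) * f p.2) (t, u))
        = (Iic t).indicator (fun u => g t * f u) := by
      ext u; by_cases h : u ≤ t <;> simp [Set.indicator_apply, h]
    rw [h1, MeasureTheory.integral_indicator measurableSet_Iic,
      Measure.restrict_restrict measurableSet_Iic]
    have h2 : Iic t ∩ Ioc 0 T = Ioc 0 t := by
      ext u
      simp only [mem_inter_iff, mem_Iic, mem_Ioc]
      exact ⟨fun h => ⟨h.2.1, h.1⟩, fun h => ⟨h.2, h.1, h.2.trans ht.2⟩⟩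
    rw [h2, MeasureTheory.integral_const_mul, intervalIntegral.integral_of_le ht.1.le, mul_comm]
  have hR : (∫ u, (∫ t, ({p : ℝ × ℝ | p.2 ≤ p.1}.indicator fun p => g ((p : ℝ × ℝ).1) * f p.2) (t, u) ∂μ) ∂μ)
      = ∫ u in (0:ℝ)..T, f u * ∫ t in u..T, g t := by
    rw [intervalIntegral.integral_of_le hT, hμ]
    refine setIntegral_congr_fun measurableSet_Ioc (fun u hu => ?_)
    have h1 : (fun t => ({p : ℝ × ℝ | p.2 ≤ p.1}.indicator fun p => g ((p : ℝ × ℝ).1) * f p.2) (t, u))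
        = (Ici u).indicator (fun t => g t * f u) := by
      ext t; by_cases h : u ≤ t <;> simp [Set.indicator_apply, h]
    rw [h1, MeasureTheory.integral_indicator measurableSet_Ici,
      Measure.restrict_restrict measurableSet_Ici]
    have h2 : Ici u ∩ Ioc 0 T = Icc u T := by
      ext t
      simp only [mem_inter_iff, mem_Ici, mem_Ioc, mem_Icc]
      exact ⟨fun h => ⟨h.1, h.2.2⟩, fun h => ⟨h.1, lt_of_lt_of_le hu.1 h.1, h.2⟩⟩
    rw [h2, MeasureTheory.integral_Icc_eq_integral_Ioc, MeasureTheory.integral_mul_const,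
      intervalIntegral.integral_of_le hu.2, mul_comm]
  rw [← hL, ← hR]
  exact swap

/-- the Gâteaux derivative of the informed trader's deterministic
functional at `η` in direction `𝔫`. -/
theorem informed_gateaux_derivative
    (T : ℝ) (hT : 0 < T) (b ψ r q₀ : ℝ) (hb : 0 < b) (hψ : 0 ≤ ψ) (hr : 0 ≤ r)
    (c : ℝ → ℝ) (hc : IntervalIntegrable (fun t => (c t) ^ 2) volume 0 T)
    (hc1 : IntervalIntegrable c volume 0 T)
    (J : (ℝ → ℝ) → ℝ)
    (hJ : ∀ γ : ℝ → ℝ, J γ =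
      ∫ t in (0:ℝ)..T,
        (-b * (γ t) ^ 2 + (q₀ + ∫ s in (0:ℝ)..t, γ s)
          * (c t - 2 * ψ * γ t - r * (q₀ + ∫ s in (0:ℝ)..t, γ s))))
    (η 𝔫 : ℝ → ℝ)
    (hη : IntervalIntegrable η volume 0 T)
    (hη2 : IntervalIntegrable (fun t => (η t) ^ 2) volume 0 T)
    (h𝔫 : IntervalIntegrable 𝔫 volume 0 T)
    (h𝔫2 : IntervalIntegrable (fun t => (𝔫 t) ^ 2) volume 0 T) :
    Tendsto (fun ε : ℝ => ε⁻¹ * (J (fun t => η t + ε * 𝔫 t) - J η))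
      (𝓝[≠] (0 : ℝ))
      (𝓝 (∫ t in (0:ℝ)..T,
        𝔫 t * (-2 * b * η t - 2 * ψ * (q₀ + ∫ s in (0:ℝ)..t, η s)
          + ∫ u in t..T,
              (c u - 2 * ψ * η u - 2 * r * (q₀ + ∫ s in (0:ℝ)..u, η s))))) := by
  have hT' : (0:ℝ) ≤ T := hT.le
  have huT : Set.uIcc (0:ℝ) T = Set.Icc 0 T := uIcc_of_le hT'
  -- continuity of the primitives
  have hQcont : ContinuousOn (fun t => q₀ + ∫ s in (0:ℝ)..t, η s) (Set.uIcc 0 T) :=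
    continuousOn_const.add (continuousOn_primitive_interval' hη left_mem_uIcc)
  have hNcont : ContinuousOn (fun t => ∫ s in (0:ℝ)..t, 𝔫 s) (Set.uIcc 0 T) :=
    continuousOn_primitive_interval' h𝔫 left_mem_uIcc
  have hQint : IntervalIntegrable (fun t => q₀ + ∫ s in (0:ℝ)..t, η s) volume 0 T :=
    hQcont.intervalIntegrable
  -- the function F
  have hF : IntervalIntegrable
      (fun t => c t - 2 * ψ * η t - 2 * r * (q₀ + ∫ s in (0:ℝ)..t, η s)) volume 0 T :=
    (hc1.sub (hη.const_mul (2 * ψ))).sub (hQint.const_mul (2 * r))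
  have hFIcc : IntegrableOn
      (fun t => c t - 2 * ψ * η t - 2 * r * (q₀ + ∫ s in (0:ℝ)..t, η s)) (Set.Icc 0 T) volume :=
    (integrableOn_Icc_iff_integrableOn_Ioc).mpr
      ((intervalIntegrable_iff_integrableOn_Ioc_of_le hT').1 hF)
  have hGcont : ContinuousOn
      (fun t => ∫ u in t..T, (c u - 2 * ψ * η u - 2 * r * (q₀ + ∫ s in (0:ℝ)..u, η s)))
      (Set.uIcc 0 T) :=
    continuousOn_primitive_interval_left (huT ▸ hFIcc)
  -- integrabilities of products
  have hη𝔫 : IntervalIntegrable (fun t => η t * 𝔫 t) volume 0 T :=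
    sq_mul_II hT' hη hη2 h𝔫 h𝔫2
  have hQ𝔫 : IntervalIntegrable
      (fun t => (q₀ + ∫ s in (0:ℝ)..t, η s) * 𝔫 t) volume 0 T := h𝔫.continuousOn_mul hQcont
  have hNF : IntervalIntegrable
      (fun t => (∫ s in (0:ℝ)..t, 𝔫 s)
        * (c t - 2 * ψ * η t - 2 * r * (q₀ + ∫ s in (0:ℝ)..t, η s))) volume 0 T :=
    hF.continuousOn_mul hNcont
  have hN𝔫 : IntervalIntegrable (fun t => (∫ s in (0:ℝ)..t, 𝔫 s) * 𝔫 t) volume 0 T :=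
    h𝔫.continuousOn_mul hNcont
  have hN2 : IntervalIntegrable
      (fun t => (∫ s in (0:ℝ)..t, 𝔫 s) * (∫ s in (0:ℝ)..t, 𝔫 s)) volume 0 T :=
    (hNcont.mul hNcont).intervalIntegrable
  have h𝔫G : IntervalIntegrable
      (fun t => 𝔫 t * ∫ u in t..T,
        (c u - 2 * ψ * η u - 2 * r * (q₀ + ∫ s in (0:ℝ)..u, η s))) volume 0 T :=
    h𝔫.mul_continuousOn hGcont
  have hbase : IntervalIntegrable
      (fun t => -b * (η t) ^ 2 + (q₀ + ∫ s in (0:ℝ)..t, η s)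
        * (c t - 2 * ψ * η t - r * (q₀ + ∫ s in (0:ℝ)..t, η s))) volume 0 T :=
    (hη2.const_mul (-b)).add
      (((hc1.sub (hη.const_mul (2 * ψ))).sub (hQint.const_mul r)).continuousOn_mul hQcont)
  have ha₁ : IntervalIntegrable
      (fun t => (-(2 * b) * (η t * 𝔫 t) - 2 * ψ * ((q₀ + ∫ s in (0:ℝ)..t, η s) * 𝔫 t))
        + (∫ s in (0:ℝ)..t, 𝔫 s)
          * (c t - 2 * ψ * η t - 2 * r * (q₀ + ∫ s in (0:ℝ)..t, η s))) volume 0 T :=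
    ((hη𝔫.const_mul (-(2 * b))).sub (hQ𝔫.const_mul (2 * ψ))).add hNF
  have hbb : IntervalIntegrable
      (fun t => -b * (𝔫 t) ^ 2 - 2 * ψ * ((∫ s in (0:ℝ)..t, 𝔫 s) * 𝔫 t)
        - r * ((∫ s in (0:ℝ)..t, 𝔫 s) * (∫ s in (0:ℝ)..t, 𝔫 s))) volume 0 T :=
    ((h𝔫2.const_mul (-b)).sub (hN𝔫.const_mul (2 * ψ))).sub (hN2.const_mul r)
  set A : ℝ := ∫ t in (0:ℝ)..T,
      ((-(2 * b) * (η t * 𝔫 t) - 2 * ψ * ((q₀ + ∫ s in (0:ℝ)..t, η s) * 𝔫 t))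
        + (∫ s in (0:ℝ)..t, 𝔫 s)
          * (c t - 2 * ψ * η t - 2 * r * (q₀ + ∫ s in (0:ℝ)..t, η s))) with hA
  set B : ℝ := ∫ t in (0:ℝ)..T,
      (-b * (𝔫 t) ^ 2 - 2 * ψ * ((∫ s in (0:ℝ)..t, 𝔫 s) * 𝔫 t)
        - r * ((∫ s in (0:ℝ)..t, 𝔫 s) * (∫ s in (0:ℝ)..t, 𝔫 s))) with hB
  -- key expansion
  have key : ∀ ε : ℝ, J (fun t => η t + ε * 𝔫 t) - J η = ε * A + ε ^ 2 * B := by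
    intro ε
    have hsplit : ∀ t ∈ Set.uIcc (0:ℝ) T,
        (∫ s in (0:ℝ)..t, (η s + ε * 𝔫 s))
          = (∫ s in (0:ℝ)..t, η s) + ε * ∫ s in (0:ℝ)..t, 𝔫 s := by
      intro t ht
      rw [huT] at ht
      have hsub : Set.uIcc (0:ℝ) t ⊆ Set.uIcc (0:ℝ) T := by
        rw [huT, uIcc_of_le ht.1]; exact Set.Icc_subset_Icc le_rfl ht.2
      have h1 : IntervalIntegrable η volume 0 t := hη.mono_set hsub
      have h2 : IntervalIntegrable 𝔫 volume 0 t := h𝔫.mono_set hsub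
      rw [intervalIntegral.integral_add h1 (h2.const_mul ε),
        intervalIntegral.integral_const_mul]
    rw [hJ, hJ]
    have hcong : (∫ t in (0:ℝ)..T,
        (-b * (η t + ε * 𝔫 t) ^ 2 + (q₀ + ∫ s in (0:ℝ)..t, (η s + ε * 𝔫 s))
          * (c t - 2 * ψ * (η t + ε * 𝔫 t)
            - r * (q₀ + ∫ s in (0:ℝ)..t, (η s + ε * 𝔫 s)))))
        = ∫ t in (0:ℝ)..T,
          ((-b * (η t) ^ 2 + (q₀ + ∫ s in (0:ℝ)..t, η s)
            * (c t - 2 * ψ * η t - r * (q₀ + ∫ s in (0:ℝ)..t, η s)))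
          + (ε * ((-(2 * b) * (η t * 𝔫 t) - 2 * ψ * ((q₀ + ∫ s in (0:ℝ)..t, η s) * 𝔫 t))
              + (∫ s in (0:ℝ)..t, 𝔫 s)
                * (c t - 2 * ψ * η t - 2 * r * (q₀ + ∫ s in (0:ℝ)..t, η s)))
            + ε ^ 2 * (-b * (𝔫 t) ^ 2 - 2 * ψ * ((∫ s in (0:ℝ)..t, 𝔫 s) * 𝔫 t)
              - r * ((∫ s in (0:ℝ)..t, 𝔫 s) * (∫ s in (0:ℝ)..t, 𝔫 s))))) := by
      refine intervalIntegral.integral_congr (fun t ht => ?_)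
      rw [hsplit t ht]
      ring
    rw [hcong, intervalIntegral.integral_add hbase
        ((ha₁.const_mul ε).add (hbb.const_mul (ε ^ 2))),
      intervalIntegral.integral_add (ha₁.const_mul ε) (hbb.const_mul (ε ^ 2)),
      intervalIntegral.integral_const_mul, intervalIntegral.integral_const_mul, ← hA, ← hB]
    ring
  -- identify A with the target
  have hAeq : A = ∫ t in (0:ℝ)..T,
      𝔫 t * (-2 * b * η t - 2 * ψ * (q₀ + ∫ s in (0:ℝ)..t, η s)
        + ∫ u in t..T,
            (c u - 2 * ψ * η u - 2 * r * (q₀ + ∫ s in (0:ℝ)..u, η s))) := by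
    rw [hA, intervalIntegral.integral_add
        ((hη𝔫.const_mul (-(2 * b))).sub (hQ𝔫.const_mul (2 * ψ))) hNF,
      fubini_primitive hT' h𝔫 hF,
      ← intervalIntegral.integral_add
        ((hη𝔫.const_mul (-(2 * b))).sub (hQ𝔫.const_mul (2 * ψ))) h𝔫G]
    refine intervalIntegral.integral_congr (fun t ht => ?_)
    ring
  rw [hAeq] at key
  have h1 : Tendsto (fun ε : ℝ => (∫ t in (0:ℝ)..T,
      𝔫 t * (-2 * b * η t - 2 * ψ * (q₀ + ∫ s in (0:ℝ)..t, η s)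
        + ∫ u in t..T,
            (c u - 2 * ψ * η u - 2 * r * (q₀ + ∫ s in (0:ℝ)..u, η s)))) + ε * B)
      (𝓝[≠] (0:ℝ))
      (𝓝 (∫ t in (0:ℝ)..T,
      𝔫 t * (-2 * b * η t - 2 * ψ * (q₀ + ∫ s in (0:ℝ)..t, η s)
        + ∫ u in t..T,
            (c u - 2 * ψ * η u - 2 * r * (q₀ + ∫ s in (0:ℝ)..u, η s))))) := by
    have := (tendsto_const_nhds (x := (∫ t in (0:ℝ)..T,
      𝔫 t * (-2 * b * η t - 2 * ψ * (q₀ + ∫ s in (0:ℝ)..t, η s)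
        + ∫ u in t..T,
            (c u - 2 * ψ * η u - 2 * r * (q₀ + ∫ s in (0:ℝ)..u, η s)))))
        (f := 𝓝[≠] (0:ℝ))).add
      ((tendsto_id.mono_left nhdsWithin_le_nhds).mul_const B)
    simpa using this
  refine h1.congr' ?_
  filter_upwards [self_mem_nhdsWithin] with ε hε
  rw [key ε]
  have hε' : ε ≠ 0 := hε
  field_simp
end
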